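/- Let n ≥ 1, let D be a real n×n diagonal matrix with diagonal entries d_k > 0, let τ > 0, and let F ∈ ℝⁿ have all components strictly positive. Set C_k = (∑_j F_j)/d_k and 𝒞 = { P ∈ ℝⁿ : 0 ≤ P_k ≤ C_k for all k }. Suppose Ã is a function from ℝⁿ to real n×n matrices such that: (i) Ã is continuous on 𝒞; (ii) for every P ∈ 𝒞 the matrix Ã(P) has nonpositive off-diagonal entries and nonnegative column sums; (iii) there are constants C ≥ 0 and C_L ≥ 1 with ‖Ã(P)‖_{∞,op} ≤ C for all P ∈ 𝒞, ‖(D + τÃ(P))⁻¹F‖_∞ ≤ C for all P ∈ 𝒞, and ‖Ã(P) − Ã(Q)‖_{∞,op} ≤ C_L‖P − Q‖_∞ for all P, Q ∈ 𝒞; and (iv) 0 < τ < d/(2C_LC), where d = min_k d_k. Then for every starting vector P⁰ ∈ 𝒞, the Gummel iterates Pˡ⁺¹ = (D + τÃ(Pˡ))⁻¹F are well defined, satisfy 0 < Pˡ_k ≤ C_k for all l ≥ 1 and all k, and converge to the unique P* ∈ 𝒞 with (D + τÃ(P*))P* = F. -/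
import Mathlib


open Matrix BigOperators

/-- The closed box `∏_k [0, c_k]` in `ℝⁿ`. -/
def box (n : ℕ) (c : Fin n → ℝ) : Set (Fin n → ℝ) :=
  {P | ∀ k, 0 ≤ P k ∧ P k ≤ c k}

/-- The maximum norm `‖v‖_∞ = max_k |v_k|` of a vector in `ℝⁿ`. -/
def vecInfNorm {n : ℕ} [NeZero n] (v : Fin n → ℝ) : ℝ :=
  Finset.univ.sup' Finset.univ_nonempty fun k => |v k|

/-- The operator norm induced by `‖·‖_∞`, i.e. the maximum absolute row sum
`‖M‖_{∞,op} = max_i ∑_j |M_{ij}|`. -/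
def matInfNorm {n : ℕ} [NeZero n] (M : Matrix (Fin n) (Fin n) ℝ) : ℝ :=
  Finset.univ.sup' Finset.univ_nonempty fun i => ∑ j, |M i j|

/-- The Gummel fixed-point map `φ(P) = (D + τ Ã(P))⁻¹ F`. -/
noncomputable def gummelMap {n : ℕ} (d : Fin n → ℝ) (τ : ℝ)
    (Atil : (Fin n → ℝ) → Matrix (Fin n) (Fin n) ℝ) (F : Fin n → ℝ) :
    (Fin n → ℝ) → (Fin n → ℝ) :=
  fun P => (Matrix.diagonal d + τ • Atil P)⁻¹ *ᵥ F

section Aux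
variable {n : ℕ} [NeZero n]

lemma abs_le_vecInfNorm (v : Fin n → ℝ) (k : Fin n) : |v k| ≤ vecInfNorm v := by
  unfold vecInfNorm
  exact Finset.le_sup' (fun k => |v k|) (Finset.mem_univ k)

lemma vecInfNorm_nonneg (v : Fin n → ℝ) : 0 ≤ vecInfNorm v := by
  obtain ⟨k, -⟩ := Finset.univ_nonempty (α := Fin n)
  exact (abs_nonneg _).trans (abs_le_vecInfNorm v k)

lemma exists_vecInfNorm_eq (v : Fin n → ℝ) : ∃ k, vecInfNorm v = |v k| := by
  obtain ⟨k, -, hk⟩ := Finset.exists_mem_eq_sup' (Finset.univ_nonempty (α := Fin n))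
    (fun k => |v k|)
  exact ⟨k, hk⟩

lemma vecInfNorm_sub_comm (u v : Fin n → ℝ) : vecInfNorm (u - v) = vecInfNorm (v - u) := by
  unfold vecInfNorm
  refine Finset.sup'_congr _ rfl fun k _ => ?_
  simp [abs_sub_comm]

lemma rowsum_le_matInfNorm (M : Matrix (Fin n) (Fin n) ℝ) (i : Fin n) :
    ∑ j, |M i j| ≤ matInfNorm M := by
  unfold matInfNorm
  exact Finset.le_sup' (fun i => ∑ j, |M i j|) (Finset.mem_univ i)

lemma abs_mulVec_le (M : Matrix (Fin n) (Fin n) ℝ) (v : Fin n → ℝ) (i : Fin n) :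
    |(M *ᵥ v) i| ≤ matInfNorm M * vecInfNorm v := by
  calc |(M *ᵥ v) i| = |∑ j, M i j * v j| := rfl
    _ ≤ ∑ j, |M i j * v j| := Finset.abs_sum_le_sum_abs _ _
    _ ≤ ∑ j, |M i j| * vecInfNorm v := by
        refine Finset.sum_le_sum fun j _ => ?_
        rw [abs_mul]
        exact mul_le_mul_of_nonneg_left (abs_le_vecInfNorm v j) (abs_nonneg _)
    _ = (∑ j, |M i j|) * vecInfNorm v := by rw [Finset.sum_mul]
    _ ≤ matInfNorm M * vecInfNorm v :=
        mul_le_mul_of_nonneg_right (rowsum_le_matInfNorm M i) (vecInfNorm_nonneg v)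

lemma vecInfNorm_eq_norm (v : Fin n → ℝ) : vecInfNorm v = ‖v‖ := by
  refine le_antisymm ?_ ?_
  · apply Finset.sup'_le
    intro k _
    simpa [Real.norm_eq_abs] using norm_le_pi_norm v k
  · refine pi_norm_le_iff_of_nonneg (vecInfNorm_nonneg v) |>.2 fun k => ?_
    simpa [Real.norm_eq_abs] using abs_le_vecInfNorm v k

/-- Strict column diagonal dominance implies invertibility. -/
lemma isUnit_det_of_col_dominant (M : Matrix (Fin n) (Fin n) ℝ)
    (h : ∀ j, ∑ i ∈ Finset.univ.erase j, |M i j| < M j j) : IsUnit M.det := by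
  rw [isUnit_iff_ne_zero]
  intro hdet
  obtain ⟨v, hv0, hv⟩ := Matrix.exists_vecMul_eq_zero_iff.2 hdet
  obtain ⟨m, -, hm⟩ := Finset.exists_max_image Finset.univ (fun i => |v i|)
    ⟨_, Finset.mem_univ (Classical.arbitrary (Fin n))⟩
  obtain ⟨m, hm⟩ : ∃ m, ∀ i, |v i| ≤ |v m| := ⟨m, fun i => hm i (Finset.mem_univ i)⟩
  have hvm : 0 < |v m| := by
    rcases (abs_nonneg (v m)).lt_or_eq with h' | h'
    · exact h'
    · exfalso; apply hv0; funext i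
      have := hm i; rw [← h'] at this
      simpa using le_antisymm this (abs_nonneg _)
  have hcol : (v ᵥ* M) m = 0 := by rw [hv]; rfl
  have hexp : v m * M m m = -∑ i ∈ Finset.univ.erase m, v i * M i m := by
    have : ∑ i, v i * M i m = 0 := hcol
    rw [← Finset.add_sum_erase _ _ (Finset.mem_univ m)] at this
    linarith
  have hb : |v m| * M m m ≤ |v m| * ∑ i ∈ Finset.univ.erase m, |M i m| := by
    have hMmm : 0 < M m m :=
      lt_of_le_of_lt (Finset.sum_nonneg fun i _ => abs_nonneg _) (h m)
    calc |v m| * M m m = |v m * M m m| := by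
          rw [abs_mul, abs_of_pos hMmm]
      _ = |∑ i ∈ Finset.univ.erase m, v i * M i m| := by rw [hexp, abs_neg]
      _ ≤ ∑ i ∈ Finset.univ.erase m, |v i * M i m| := Finset.abs_sum_le_sum_abs _ _
      _ ≤ ∑ i ∈ Finset.univ.erase m, |v m| * |M i m| := by
          refine Finset.sum_le_sum fun i _ => ?_
          rw [abs_mul]
          exact mul_le_mul_of_nonneg_right (hm i) (abs_nonneg _)
      _ = |v m| * ∑ i ∈ Finset.univ.erase m, |M i m| := by rw [Finset.mul_sum]
  have := (mul_lt_mul_iff_right₀ hvm).2 (h m)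
  linarith

/-- Row-dominance comparison lemma: nonneg RHS gives nonneg solution. -/
lemma nonneg_of_mulVec_nonneg (B : Matrix (Fin n) (Fin n) ℝ)
    (hoffB : ∀ i j, i ≠ j → B i j ≤ 0) (hrow : ∀ i, 0 < ∑ j, B i j)
    (y : Fin n → ℝ) (he : ∀ i, 0 ≤ (B *ᵥ y) i) : ∀ i, 0 ≤ y i := by
  by_contra hcon
  push_neg at hcon
  obtain ⟨m, -, hm⟩ := Finset.exists_min_image Finset.univ (fun i => y i)
    ⟨_, Finset.mem_univ (Classical.arbitrary (Fin n))⟩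
  obtain ⟨i0, hi0⟩ := hcon
  have hym : y m < 0 := lt_of_le_of_lt (hm i0 (Finset.mem_univ i0)) hi0
  have key : (B *ᵥ y) m ≤ (∑ j, B m j) * y m := by
    calc (B *ᵥ y) m = ∑ j, B m j * y j := rfl
      _ ≤ ∑ j, B m j * y m := by
          refine Finset.sum_le_sum fun j _ => ?_
          rcases eq_or_ne m j with rfl | hne
          · exact le_rfl
          · exact mul_le_mul_of_nonpos_left (hm j (Finset.mem_univ j)) (hoffB m j hne)
      _ = (∑ j, B m j) * y m := by rw [Finset.sum_mul]
  have h2 : (∑ j, B m j) * y m < 0 := mul_neg_of_pos_of_neg (hrow m) hym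
  linarith [he m]

lemma solve_pos (d : Fin n → ℝ) (hd : ∀ k, 0 < d k) (τ : ℝ) (hτ : 0 < τ)
    (F : Fin n → ℝ) (hF : ∀ k, 0 < F k) (N : Matrix (Fin n) (Fin n) ℝ)
    (hoffN : ∀ i j, i ≠ j → N i j ≤ 0) (hcolN : ∀ j, 0 ≤ ∑ i, N i j) :
    IsUnit (Matrix.diagonal d + τ • N).det ∧
      ∀ k, 0 < ((Matrix.diagonal d + τ • N)⁻¹ *ᵥ F) k ∧
        ((Matrix.diagonal d + τ • N)⁻¹ *ᵥ F) k ≤ (∑ j, F j) / d k := by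
  set M := Matrix.diagonal d + τ • N with hMdef
  have hMentry : ∀ i j, M i j = Matrix.diagonal d i j + τ * N i j := fun i j => rfl
  have hMoff : ∀ i j, i ≠ j → M i j ≤ 0 := by
    intro i j hij
    rw [hMentry, Matrix.diagonal_apply_ne _ hij]
    have := hoffN i j hij
    nlinarith
  have hMcol : ∀ j, d j ≤ ∑ i, M i j := by
    intro j
    have h1 : ∑ i, M i j = d j + τ * ∑ i, N i j := by
      have : ∑ i, Matrix.diagonal d i j = d j := by
        simp [Matrix.diagonal_apply]
      simp only [hMentry, Finset.sum_add_distrib, this, Finset.mul_sum]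
    nlinarith [hcolN j]
  have hdom : ∀ j, ∑ i ∈ Finset.univ.erase j, |M i j| < M j j := by
    intro j
    have he : ∑ i ∈ Finset.univ.erase j, |M i j| = -∑ i ∈ Finset.univ.erase j, M i j := by
      rw [← Finset.sum_neg_distrib]
      exact Finset.sum_congr rfl fun i hi =>
        abs_of_nonpos (hMoff i j (Finset.ne_of_mem_erase hi))
    have hs : ∑ i, M i j = M j j + ∑ i ∈ Finset.univ.erase j, M i j :=
      (Finset.add_sum_erase _ _ (Finset.mem_univ j)).symm
    have h1 := hMcol j
    have h2 := hd j
    rw [he]; linarith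
  have hdet : IsUnit M.det := isUnit_det_of_col_dominant M hdom
  have hBdet : IsUnit Mᵀ.det := by rwa [Matrix.det_transpose]
  have hMinv_nonneg : ∀ i j, 0 ≤ M⁻¹ i j := by
    intro i j
    have hoffT : ∀ a b, a ≠ b → Mᵀ a b ≤ 0 := fun a b hab => hMoff b a (Ne.symm hab)
    have hrowT : ∀ a, 0 < ∑ b, Mᵀ a b := by
      intro a
      have : ∑ b, Mᵀ a b = ∑ b, M b a := rfl
      rw [this]
      exact lt_of_lt_of_le (hd a) (hMcol a)
    have hprod : Mᵀ *ᵥ ((Mᵀ)⁻¹ *ᵥ Pi.single i 1) = Pi.single i 1 := by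
      rw [Matrix.mulVec_mulVec, Matrix.mul_nonsing_inv _ hBdet, Matrix.one_mulVec]
    have hnn := nonneg_of_mulVec_nonneg Mᵀ hoffT hrowT ((Mᵀ)⁻¹ *ᵥ Pi.single i 1)
      (by rw [hprod]; intro i'
          by_cases h : i' = i <;> simp [h, Pi.single_apply]) j
    rw [Matrix.mulVec_single] at hnn
    rw [← Matrix.transpose_nonsing_inv] at hnn
    simpa [Matrix.transpose_apply] using hnn
  set x := M⁻¹ *ᵥ F with hxdef
  have hxk : ∀ k, x k = ∑ j, M⁻¹ k j * F j := fun k => rfl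
  have hx_nonneg : ∀ k, 0 ≤ x k := by
    intro k
    rw [hxk k]
    exact Finset.sum_nonneg fun j _ => mul_nonneg (hMinv_nonneg k j) (hF j).le
  have hx_pos : ∀ k, 0 < x k := by
    intro k
    rcases (hx_nonneg k).lt_or_eq with h | h
    · exact h
    · exfalso
      have hz : ∑ j, M⁻¹ k j * F j = 0 := by rw [← hxk k]; exact h.symm
      have hall := (Finset.sum_eq_zero_iff_of_nonneg
        (fun j (_ : j ∈ Finset.univ) => mul_nonneg (hMinv_nonneg k j) (hF j).le)).1 hz
      have hrow0 : ∀ j, M⁻¹ k j = 0 := by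
        intro j
        rcases mul_eq_zero.1 (hall j (Finset.mem_univ j)) with h' | h'
        · exact h'
        · exact absurd h' (hF j).ne'
      have h1 : (M⁻¹ * M) k k = (1 : ℝ) := by
        rw [Matrix.nonsing_inv_mul _ hdet]; simp
      have h0 : (M⁻¹ * M) k k = 0 := by
        rw [Matrix.mul_apply]
        exact Finset.sum_eq_zero fun j _ => by rw [hrow0 j, zero_mul]
      linarith
  have hMx : M *ᵥ x = F := by
    rw [hxdef, Matrix.mulVec_mulVec, Matrix.mul_nonsing_inv _ hdet, Matrix.one_mulVec]
  have hsum : ∑ j, F j = ∑ j, (∑ i, M i j) * x j := by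
    calc ∑ j, F j = ∑ i, (M *ᵥ x) i := by rw [hMx]
      _ = ∑ i, ∑ j, M i j * x j := rfl
      _ = ∑ j, ∑ i, M i j * x j := Finset.sum_comm
      _ = ∑ j, (∑ i, M i j) * x j := by
          exact Finset.sum_congr rfl fun j _ => (Finset.sum_mul _ _ _).symm
  have hub : ∀ k, x k ≤ (∑ j, F j) / d k := by
    intro k
    rw [le_div_iff₀ (hd k), mul_comm]
    have h1 : d k * x k ≤ (∑ i, M i k) * x k :=
      mul_le_mul_of_nonneg_right (hMcol k) (hx_nonneg k)
    have h2 : (∑ i, M i k) * x k ≤ ∑ j, (∑ i, M i j) * x j :=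
      Finset.single_le_sum (f := fun j => (∑ i, M i j) * x j)
        (fun j _ => mul_nonneg (le_trans (hd j).le (hMcol j)) (hx_nonneg j))
        (Finset.mem_univ k)
    linarith
  exact ⟨hdet, fun k => ⟨hx_pos k, hub k⟩⟩

end Aux

/-- well-definedness, strict positivity, boundedness and
convergence of the Gummel iterates `Pˡ⁺¹ = (D + τ Ã(Pˡ))⁻¹ F` to the unique
solution of the nonlinear discrete system, for time steps below the contraction
threshold `τ_C = d/(2 C_L C)` with `d = min_k d_k`. -/
theorem gummel_iteration_well_defined_positive_convergent
    (n : ℕ) [NeZero n] (d : Fin n → ℝ) (hd : ∀ k, 0 < d k)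
    (τ : ℝ) (hτ : 0 < τ) (F : Fin n → ℝ) (hF : ∀ k, 0 < F k)
    (Atil : (Fin n → ℝ) → Matrix (Fin n) (Fin n) ℝ)
    (hcont : ContinuousOn Atil (box n fun k => (∑ j, F j) / d k))
    (hoff : ∀ P ∈ box n fun k => (∑ j, F j) / d k,
      ∀ i j, i ≠ j → Atil P i j ≤ 0)
    (hcol : ∀ P ∈ box n fun k => (∑ j, F j) / d k,
      ∀ j, 0 ≤ ∑ i, Atil P i j)
    (C CL : ℝ) (hC : 0 ≤ C) (hCL : 1 ≤ CL)
    (hAbound : ∀ P ∈ box n fun k => (∑ j, F j) / d k,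
      matInfNorm (Atil P) ≤ C)
    (hphibound : ∀ P ∈ box n fun k => (∑ j, F j) / d k,
      vecInfNorm (gummelMap d τ Atil F P) ≤ C)
    (hLip : ∀ P ∈ box n fun k => (∑ j, F j) / d k,
      ∀ Q ∈ box n fun k => (∑ j, F j) / d k,
      matInfNorm (Atil P - Atil Q) ≤ CL * vecInfNorm (P - Q))
    (hτC : τ < (Finset.univ.inf' Finset.univ_nonempty d) / (2 * CL * C)) :
    ∀ P0 ∈ box n fun k => (∑ j, F j) / d k,
      (∀ l : ℕ,
        IsUnit (Matrix.diagonal d + τ • Atil ((gummelMap d τ Atil F)^[l] P0)).det) ∧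
      (∀ l : ℕ, 1 ≤ l → ∀ k,
        0 < (gummelMap d τ Atil F)^[l] P0 k ∧
        (gummelMap d τ Atil F)^[l] P0 k ≤ (∑ j, F j) / d k) ∧
      ∃ Pstar ∈ box n fun k => (∑ j, F j) / d k,
        (Matrix.diagonal d + τ • Atil Pstar) *ᵥ Pstar = F ∧
        (∀ Q ∈ box n fun k => (∑ j, F j) / d k,
          (Matrix.diagonal d + τ • Atil Q) *ᵥ Q = F → Q = Pstar) ∧
        Filter.Tendsto (fun l => (gummelMap d τ Atil F)^[l] P0)
          Filter.atTop (nhds Pstar) := by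
  intro P0 hP0
  set φ := gummelMap d τ Atil F with hφ
  have hφdef : ∀ P, φ P = (Matrix.diagonal d + τ • Atil P)⁻¹ *ᵥ F := fun P => rfl
  -- key facts
  have hkey : ∀ P ∈ box n fun k => (∑ j, F j) / d k,
      IsUnit (Matrix.diagonal d + τ • Atil P).det ∧
      ∀ k, 0 < φ P k ∧ φ P k ≤ (∑ j, F j) / d k := by
    intro P hP
    exact solve_pos d hd τ hτ F hF (Atil P) (hoff P hP) (hcol P hP)
  have hmaps : ∀ P ∈ box n fun k => (∑ j, F j) / d k,
      φ P ∈ box n fun k => (∑ j, F j) / d k :=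
    fun P hP k => ⟨((hkey P hP).2 k).1.le, ((hkey P hP).2 k).2⟩
  have hiter : ∀ l, φ^[l] P0 ∈ box n fun k => (∑ j, F j) / d k := by
    intro l
    induction l with
    | zero => simpa using hP0
    | succ l ih => rw [Function.iterate_succ_apply']; exact hmaps _ ih
  -- constants
  set dmin := Finset.univ.inf' Finset.univ_nonempty d with hdmin
  have hdmin_pos : 0 < dmin := by
    rw [hdmin, Finset.lt_inf'_iff]
    exact fun k _ => hd k
  have hdmin_le : ∀ k, dmin ≤ d k := fun k => Finset.inf'_le _ (Finset.mem_univ k)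
  have hCL0 : (0 : ℝ) < CL := lt_of_lt_of_le one_pos hCL
  have hCpos : 0 < C := by
    rcases hC.lt_or_eq with h | h
    · exact h
    · exfalso
      rw [← h, mul_zero, div_zero] at hτC
      linarith
  have hden : (0 : ℝ) < 2 * CL * C := by positivity
  have hτsmall : τ * (2 * CL * C) < dmin := (lt_div_iff₀ hden).1 hτC
  have h2C : τ * C ≤ dmin / 2 := by nlinarith
  -- contraction
  have hcontr : ∀ P ∈ box n fun k => (∑ j, F j) / d k,
      ∀ Q ∈ box n fun k => (∑ j, F j) / d k,
      vecInfNorm (φ P - φ Q) ≤ (2 * τ * CL * C / dmin) * vecInfNorm (P - Q) := by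
    intro P hP Q hQ
    set AP := Matrix.diagonal d + τ • Atil P with hAP
    set AQ := Matrix.diagonal d + τ • Atil Q with hAQ
    have hdetP := (hkey P hP).1
    have hdetQ := (hkey Q hQ).1
    have hAPφ : AP *ᵥ φ P = F := by
      rw [hφdef, Matrix.mulVec_mulVec, Matrix.mul_nonsing_inv _ hdetP, Matrix.one_mulVec]
    have hAQφ : AQ *ᵥ φ Q = F := by
      rw [hφdef, Matrix.mulVec_mulVec, Matrix.mul_nonsing_inv _ hdetQ, Matrix.one_mulVec]
    set e := φ P - φ Q with hedef
    set S := Atil Q - Atil P with hS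
    have he : AP *ᵥ e = (τ • S) *ᵥ φ Q := by
      have h1 : AP *ᵥ e = AP *ᵥ φ P - AP *ᵥ φ Q := Matrix.mulVec_sub _ _ _
      have h2 : AQ - AP = τ • S := by
        rw [hAQ, hAP, hS]
        module
      rw [h1, hAPφ, ← hAQφ, ← Matrix.sub_mulVec, h2]
    set E := vecInfNorm e with hE
    set R := vecInfNorm (P - Q) with hR
    have hEnn : 0 ≤ E := vecInfNorm_nonneg e
    have hRnn : 0 ≤ R := vecInfNorm_nonneg _
    obtain ⟨k, hk⟩ := exists_vecInfNorm_eq e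
    -- componentwise identity
    have hident : d k * e k = ((τ • S) *ᵥ φ Q) k - τ * ((Atil P) *ᵥ e) k := by
      have h1 : (AP *ᵥ e) k = d k * e k + τ * ((Atil P) *ᵥ e) k := by
        rw [hAP, Matrix.add_mulVec, Matrix.smul_mulVec]
        simp [Matrix.mulVec_diagonal]
      rw [← he, h1]
      ring
    have hb1 : |((τ • S) *ᵥ φ Q) k| ≤ τ * (CL * R * C) := by
      have h1 : ((τ • S) *ᵥ φ Q) k = τ * ((S *ᵥ φ Q) k) := by
        rw [Matrix.smul_mulVec]; simp
      rw [h1, abs_mul, abs_of_pos hτ]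
      have h2 : |(S *ᵥ φ Q) k| ≤ matInfNorm S * vecInfNorm (φ Q) := abs_mulVec_le _ _ _
      have h3 : matInfNorm S ≤ CL * R := by
        have := hLip Q hQ P hP
        rwa [← hS, vecInfNorm_sub_comm, ← hR] at this
      have h4 : vecInfNorm (φ Q) ≤ C := hphibound Q hQ
      have h5 : matInfNorm S * vecInfNorm (φ Q) ≤ CL * R * C :=
        mul_le_mul h3 h4 (vecInfNorm_nonneg _) (by positivity)
      exact mul_le_mul_of_nonneg_left (h2.trans h5) hτ.le
    have hb2 : |((Atil P) *ᵥ e) k| ≤ C * E := by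
      have h2 := abs_mulVec_le (Atil P) e k
      have h3 : matInfNorm (Atil P) * vecInfNorm e ≤ C * E :=
        mul_le_mul_of_nonneg_right (hAbound P hP) hEnn
      exact h2.trans h3
    have hmain : dmin * E ≤ τ * (CL * R * C) + τ * (C * E) := by
      have hstep : dmin * E ≤ d k * |e k| := by
        rw [hE, hk]
        exact mul_le_mul_of_nonneg_right (hdmin_le k) (abs_nonneg _)
      have hstep2 : d k * |e k| = |d k * e k| := by
        rw [abs_mul, abs_of_pos (hd k)]
      have hstep3 : |d k * e k| ≤ τ * (CL * R * C) + τ * (C * E) := by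
        rw [hident]
        calc |((τ • S) *ᵥ φ Q) k - τ * ((Atil P) *ᵥ e) k|
            ≤ |((τ • S) *ᵥ φ Q) k| + |τ * ((Atil P) *ᵥ e) k| := abs_sub _ _
          _ ≤ τ * (CL * R * C) + τ * (C * E) := by
              refine add_le_add hb1 ?_
              rw [abs_mul, abs_of_pos hτ]
              exact mul_le_mul_of_nonneg_left hb2 hτ.le
      linarith [hstep, hstep2, hstep3]
    -- conclude
    show E ≤ 2 * τ * CL * C / dmin * R
    rw [div_mul_eq_mul_div, le_div_iff₀ hdmin_pos]
    nlinarith [mul_le_mul_of_nonneg_right h2C hEnn]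
  -- Banach fixed point on the box
  have hclosed : IsClosed (box n fun k => (∑ j, F j) / d k) := by
    have : (box n fun k => (∑ j, F j) / d k) =
        Set.pi Set.univ (fun k => Set.Icc (0 : ℝ) ((∑ j, F j) / d k)) := by
      ext P
      simp only [box, Set.mem_setOf_eq, Set.mem_univ_pi, Set.mem_Icc]
    rw [this]
    exact isClosed_set_pi fun k _ => isClosed_Icc
  haveI : CompleteSpace (box n fun k => (∑ j, F j) / d k) := hclosed.completeSpace_coe
  haveI : Nonempty (box n fun k => (∑ j, F j) / d k) := ⟨⟨P0, hP0⟩⟩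
  set q : NNReal := ⟨2 * τ * CL * C / dmin, by positivity⟩ with hq
  have hqcoe : (q : ℝ) = 2 * τ * CL * C / dmin := rfl
  have hq1 : q < 1 := by
    rw [← NNReal.coe_lt_coe, hqcoe, NNReal.coe_one, div_lt_one hdmin_pos]
    nlinarith
  set f : (box n fun k => (∑ j, F j) / d k) → (box n fun k => (∑ j, F j) / d k) :=
    fun p => ⟨φ p.1, hmaps p.1 p.2⟩ with hf
  have hLf : LipschitzWith q f := by
    apply LipschitzWith.of_dist_le_mul
    intro x y
    have h1 : dist (f x) (f y) = vecInfNorm (φ x.1 - φ y.1) := by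
      rw [Subtype.dist_eq, dist_eq_norm, vecInfNorm_eq_norm]
    have h2 : dist x y = vecInfNorm (x.1 - y.1) := by
      rw [Subtype.dist_eq, dist_eq_norm, vecInfNorm_eq_norm]
    rw [h1, h2, hqcoe]
    exact hcontr x.1 x.2 y.1 y.2
  have hCW : ContractingWith q f := ⟨hq1, hLf⟩
  set p0 : (box n fun k => (∑ j, F j) / d k) := ⟨P0, hP0⟩ with hp0
  set pstar := ContractingWith.fixedPoint f hCW with hpstar
  have hfix : Function.IsFixedPt f pstar := hCW.fixedPoint_isFixedPt
  have htend := hCW.tendsto_iterate_fixedPoint p0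
  have hcomm : ∀ l, (f^[l] p0).1 = φ^[l] P0 := by
    intro l
    induction l with
    | zero => rfl
    | succ l ih =>
      rw [Function.iterate_succ_apply', Function.iterate_succ_apply']
      show φ (f^[l] p0).1 = _
      rw [ih]
  have hfixval : φ pstar.1 = pstar.1 := congrArg Subtype.val hfix
  have hstareq : (Matrix.diagonal d + τ • Atil pstar.1) *ᵥ pstar.1 = F := by
    have h : (Matrix.diagonal d + τ • Atil pstar.1) *ᵥ (φ pstar.1) = F := by
      rw [hφdef, Matrix.mulVec_mulVec, Matrix.mul_nonsing_inv _ (hkey pstar.1 pstar.2).1,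
        Matrix.one_mulVec]
    rwa [hfixval] at h
  refine ⟨fun l => (hkey _ (hiter l)).1, ?_, pstar.1, pstar.2, hstareq, ?_, ?_⟩
  · intro l hl k
    obtain ⟨m, rfl⟩ := Nat.exists_eq_add_of_le hl
    rw [add_comm, Function.iterate_succ_apply']
    exact (hkey _ (hiter m)).2 k
  · intro Q hQ hQeq
    have hφQ : φ Q = Q := by
      rw [hφdef, ← hQeq, Matrix.mulVec_mulVec, Matrix.nonsing_inv_mul _ (hkey Q hQ).1,
        Matrix.one_mulVec]
    have hQfix : Function.IsFixedPt f ⟨Q, hQ⟩ := Subtype.ext hφQ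
    have := hCW.fixedPoint_unique hQfix
    exact congrArg Subtype.val this
  · have : Filter.Tendsto (fun l => (f^[l] p0).1) Filter.atTop (nhds pstar.1) :=
      (continuous_subtype_val.tendsto pstar).comp htend
    refine this.congr fun l => hcomm l
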